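/- Let ι be a nonempty finite type and let ρ : (ι → ℝ) → ℝ be a vector of weights. Then the set of values 𝒱_ρ = {ρ(σ) : σ ∈ ℤ≥0^ι} ⊆ ℝ has the same order type as ℤ≥0: there exists a strictly monotone bijection from ℕ onto 𝒱_ρ. -/
import Mathlib


/-- A vector of weights on `ℝ^ι`: a linear map `ρ : (ι → ℝ) → ℝ` with `ρ(σ) > 0`
for every nonzero `σ` with all coordinates nonnegative. -/
def IsWeightVector {ι : Type*} (ρ : (ι → ℝ) →ₗ[ℝ] ℝ) : Prop :=
  ∀ σ : ι → ℝ, (∀ i, 0 ≤ σ i) → σ ≠ 0 → 0 < ρ σ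

/-- For a vector of weights `ρ` on `ℝ^ι` (`ι` finite and nonempty),
the set of values `𝒱_ρ = ρ(ℤ≥0^ι)` has the order type of `ℤ≥0`: there is a
strictly monotone bijection from `ℕ` onto `𝒱_ρ`. -/
theorem weight_values_order_type_nat {ι : Type*} [Fintype ι] [Nonempty ι]
    (ρ : (ι → ℝ) →ₗ[ℝ] ℝ) (hρ : IsWeightVector ρ) :
    ∃ f : ℕ → ℝ, StrictMono f ∧
      Set.range f = {v : ℝ | ∃ σ : ι → ℕ, ρ (fun i => (σ i : ℝ)) = v} := by
  classical
  set S : Set ℝ := {v : ℝ | ∃ σ : ι → ℕ, ρ (fun i => (σ i : ℝ)) = v} with hSdef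
  -- the basic weights
  set w : ι → ℝ := fun i => ρ (fun j => if i = j then 1 else 0) with hw
  have hwpos : ∀ i, 0 < w i := by
    intro i
    refine hρ _ (fun j => ?_) ?_
    · split <;> norm_num
    · intro h
      have := congrFun h i
      simp at this
  have hsum : ∀ σ : ι → ℝ, ρ σ = ∑ i, σ i * w i := by
    intro σ
    rw [LinearMap.pi_apply_eq_sum_univ]
    simp [hw, smul_eq_mul]
  -- each term bounds below
  have hterm : ∀ (σ : ι → ℕ) (j : ι), (σ j : ℝ) * w j ≤ ρ (fun i => (σ i : ℝ)) := by
    intro σ j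
    rw [hsum]
    refine Finset.single_le_sum (f := fun i => (σ i : ℝ) * w i) (fun i _ => ?_)
      (Finset.mem_univ j)
    exact mul_nonneg (Nat.cast_nonneg _) (hwpos i).le
  -- values are nonnegative
  have hnn : ∀ v ∈ S, (0 : ℝ) ≤ v := by
    rintro v ⟨σ, rfl⟩
    rw [hsum]
    exact Finset.sum_nonneg fun i _ => mul_nonneg (Nat.cast_nonneg _) (hwpos i).le
  have h0 : (0 : ℝ) ∈ S := ⟨0, by
    have : (fun i : ι => (((0 : ι → ℕ) i : ℕ) : ℝ)) = (0 : ι → ℝ) := by funext i; simp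
    rw [this, map_zero]⟩
  -- bounded initial segments are finite
  have hfin : ∀ c : ℝ, (S ∩ Set.Iic c).Finite := by
    intro c
    set N : ι → ℕ := fun i => ⌈c / w i⌉₊ with hN
    have hsub : S ∩ Set.Iic c ⊆
        (fun σ : ι → ℕ => ρ (fun i => (σ i : ℝ))) '' (Set.pi Set.univ fun i => Set.Iic (N i)) := by
      rintro v ⟨⟨σ, rfl⟩, hvc⟩
      refine ⟨σ, fun j _ => ?_, rfl⟩
      have h1 : (σ j : ℝ) * w j ≤ c := le_trans (hterm σ j) hvc
      have h2 : (σ j : ℝ) ≤ c / w j := (le_div_iff₀ (hwpos j)).2 h1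
      have h3 : (σ j : ℝ) ≤ (N j : ℝ) := le_trans h2 (Nat.le_ceil _)
      exact_mod_cast h3
    exact Set.Finite.subset (Set.Finite.image _ (Set.Finite.pi fun i => Set.finite_Iic _)) hsub
  -- S is infinite
  have hinf : S.Infinite := by
    have hone : 0 < ρ (fun _ => (1 : ℝ)) := by
      refine hρ _ (fun i => zero_le_one) ?_
      intro h
      have := congrFun h (Classical.arbitrary ι)
      simp at this
    have hg : ∀ n : ℕ, ρ (fun i => (((fun _ => n : ι → ℕ) i : ℕ) : ℝ))
        = (n : ℝ) * ρ (fun _ => (1 : ℝ)) := by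
      intro n
      have : (fun _ : ι => ((n : ℕ) : ℝ)) = (n : ℝ) • (fun _ : ι => (1 : ℝ)) := by
        funext i; simp
      rw [this, map_smul, smul_eq_mul]
    refine Set.infinite_of_injective_forall_mem
      (f := fun n : ℕ => ρ (fun i => (((fun _ => n : ι → ℕ) i : ℕ) : ℝ))) ?_ ?_
    · intro a b hab
      simp only [hg] at hab
      have := mul_right_cancel₀ (ne_of_gt hone) hab
      exact_mod_cast this
    · intro n
      exact ⟨fun _ => n, rfl⟩
  -- every nonempty subset of S has a least element
  have hleast : ∀ T : Set ℝ, T ⊆ S → T.Nonempty → ∃ m ∈ T, ∀ x ∈ T, m ≤ x := by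
    intro T hTS ⟨c, hc⟩
    have hfin' : (T ∩ Set.Iic c).Finite :=
      (hfin c).subset (by exact fun x ⟨h1, h2⟩ => ⟨hTS h1, h2⟩)
    obtain ⟨m, hm, hmin⟩ := Set.exists_min_image _ id hfin' ⟨c, hc, le_refl c⟩
    refine ⟨m, hm.1, fun x hx => ?_⟩
    by_cases hxc : x ≤ c
    · exact hmin x ⟨hx, hxc⟩
    · exact le_trans hm.2 (le_of_not_ge hxc)
  -- the counting function
  set h : S → ℕ := fun v => (S ∩ Set.Iio (v : ℝ)).ncard with hh
  have hmono : StrictMono h := by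
    intro u v huv
    have hss : S ∩ Set.Iio (u : ℝ) ⊂ S ∩ Set.Iio (v : ℝ) := by
      constructor
      · intro x hx
        exact Set.mem_inter hx.1 (Set.mem_Iio.2 (lt_trans (Set.mem_Iio.1 hx.2) huv))
      · intro hcon
        have : (u : ℝ) ∈ S ∩ Set.Iio (u : ℝ) :=
          hcon (Set.mem_inter u.2 (Set.mem_Iio.2 huv))
        exact absurd (Set.mem_Iio.1 this.2) (lt_irrefl _)
    exact Set.ncard_lt_ncard hss
      ((hfin v).subset (Set.inter_subset_inter_right S Set.Iio_subset_Iic_self))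
  have hsurj : Function.Surjective h := by
    intro n
    induction n with
    | zero =>
      refine ⟨⟨0, h0⟩, ?_⟩
      have : S ∩ Set.Iio (0 : ℝ) = ∅ := by
        ext x
        simp only [Set.mem_inter_iff, Set.mem_Iio, Set.mem_empty_iff_false, iff_false]
        rintro ⟨hx1, hx2⟩
        exact absurd (hnn x hx1) (not_le.2 hx2)
      simp [hh, this]
    | succ n ih =>
      obtain ⟨⟨v, hvS⟩, hv⟩ := ih
      have hTne : (S ∩ Set.Ioi v).Nonempty := by
        rw [Set.nonempty_iff_ne_empty]
        intro hcon
        apply hinf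
        refine (hfin v).subset fun x hx => Set.mem_inter hx ?_
        by_contra hxv
        have hmem : x ∈ S ∩ Set.Ioi v :=
          Set.mem_inter hx (Set.mem_Ioi.2 (not_le.1 hxv))
        rw [hcon] at hmem
        exact Set.notMem_empty x hmem
      obtain ⟨m, hmT, hmin⟩ := hleast _ (fun x hx => hx.1) hTne
      refine ⟨⟨m, hmT.1⟩, ?_⟩
      have heq : S ∩ Set.Iio m = insert v (S ∩ Set.Iio v) := by
        ext x
        simp only [Set.mem_inter_iff, Set.mem_Iio, Set.mem_insert_iff]
        constructor
        · rintro ⟨hx1, hx2⟩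
          rcases lt_trichotomy x v with hlt | heq' | hgt
          · exact Or.inr ⟨hx1, hlt⟩
          · exact Or.inl heq'
          · exact absurd (hmin x ⟨hx1, hgt⟩) (not_le.2 hx2)
        · rintro (rfl | ⟨hx1, hx2⟩)
          · exact ⟨hvS, hmT.2⟩
          · exact ⟨hx1, lt_trans hx2 hmT.2⟩
      have hfv : (S ∩ Set.Iio v).Finite :=
        (hfin v).subset (Set.inter_subset_inter_right S Set.Iio_subset_Iic_self)
      simp only [hh] at hv ⊢
      rw [heq, Set.ncard_insert_of_notMem
        (fun hcon => absurd (Set.mem_Iio.1 hcon.2) (lt_irrefl v)) hfv, hv]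
  -- assemble the order isomorphism
  let e : S ≃o ℕ := StrictMono.orderIsoOfSurjective h hmono hsurj
  refine ⟨fun n => ((e.symm n : S) : ℝ), ?_, ?_⟩
  · intro a b hab
    exact e.symm.strictMono hab
  · ext x
    constructor
    · rintro ⟨n, rfl⟩
      exact (e.symm n).2
    · intro hx
      exact ⟨e ⟨x, hx⟩, by simp⟩
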